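/- arXiv:0807.1595 — 4 statements merged into one kernel-verified Lean document; each statement's English description precedes it below -/
import Mathlib

section
/- Let (V,j,⟨·,·⟩) be an anti-Kaehlerian vector space and R : V × V × V → V a trilinear curvature-like tensor. Suppose G is a connected Lie subgroup of SO_AK(V), G_W is a compact connected subgroup of SO(W) for a totally real positive-definite subspace W of V with G = (G_W)^ℂ, and R_W := pr_W ∘ R|_{W×W×W} is G_W-symmetric, i.e., R_W(gw₁,gw₂)gw₃ = g R_W(w₁,w₂)w₃ for all g ∈ G_W, wᵢ ∈ W. If moreover R commutes appropriately with j (j∘R(v₁,v₂) = R(jv₁,v₂) = R(v₁,v₂)∘j) and R is the complexification of R_W, then R is G-symmetric: R(gv₁,gv₂)gv₃ = g R(v₁,v₂)v₃ for all g ∈ G and vᵢ ∈ V. -/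
open NormedSpace

section AuxiliaryLemmas

variable {V : Type*} [NormedAddCommGroup V] [NormedSpace ℝ V] [FiniteDimensional ℝ V]

/-- The trilinear tensor `R` as a linear map into continuous linear maps. -/
noncomputable def trilinCLM (R : V →ₗ[ℝ] V →ₗ[ℝ] V →ₗ[ℝ] V) :
    V →ₗ[ℝ] (V →L[ℝ] V →L[ℝ] V) where
  toFun a := LinearMap.toContinuousLinearMap
      { toFun := fun b => LinearMap.toContinuousLinearMap (R a b)
        map_add' := fun b b' => by ext v; simp
        map_smul' := fun c b => by ext v; simp }
  map_add' a a' := by ext b v; simp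
  map_smul' c a := by ext b v; simp

@[simp] lemma trilinCLM_apply (R : V →ₗ[ℝ] V →ₗ[ℝ] V →ₗ[ℝ] V) (a b c : V) :
    trilinCLM R a b c = R a b c := rfl

lemma linear_comp_hasDerivAt {V G : Type*} [NormedAddCommGroup V] [NormedSpace ℝ V]
    [FiniteDimensional ℝ V] [NormedAddCommGroup G] [NormedSpace ℝ G]
    (L : V →ₗ[ℝ] G) {f : ℝ → V} {f' : V} {t : ℝ} (hf : HasDerivAt f f' t) :
    HasDerivAt (fun s => L (f s)) (L f') t := by
  have := (LinearMap.toContinuousLinearMap L).hasFDerivAt.comp_hasDerivAt t hf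
  exact this

/-- Derivative of `s ↦ R (exp(sC)x) (exp(sC)y) (exp(sC)z)`. -/
lemma curve_deriv (R : V →ₗ[ℝ] V →ₗ[ℝ] V →ₗ[ℝ] V) (C : V →L[ℝ] V) (x y z : V) (t : ℝ) :
    HasDerivAt (fun s : ℝ => R (exp (s • C) x) (exp (s • C) y) (exp (s • C) z))
      (R ((exp (t • C) * C) x) (exp (t • C) y) (exp (t • C) z)
        + R (exp (t • C) x) ((exp (t • C) * C) y) (exp (t • C) z)
        + R (exp (t • C) x) (exp (t • C) y) ((exp (t • C) * C) z)) t := by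
  have h1 : HasDerivAt (fun s : ℝ => exp (s • C)) (exp (t • C) * C) t :=
    hasDerivAt_exp_smul_const C t
  have hx : HasDerivAt (fun s : ℝ => exp (s • C) x) ((exp (t • C) * C) x) t := by
    simpa using h1.clm_apply (hasDerivAt_const t x)
  have hy : HasDerivAt (fun s : ℝ => exp (s • C) y) ((exp (t • C) * C) y) t := by
    simpa using h1.clm_apply (hasDerivAt_const t y)
  have hz : HasDerivAt (fun s : ℝ => exp (s • C) z) ((exp (t • C) * C) z) t := by
    simpa using h1.clm_apply (hasDerivAt_const t z)
  have h2 : HasDerivAt (fun s : ℝ => trilinCLM R (exp (s • C) x))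
      (trilinCLM R ((exp (t • C) * C) x)) t :=
    linear_comp_hasDerivAt (G := V →L[ℝ] V →L[ℝ] V) (trilinCLM R) hx
  have h3 := h2.clm_apply hy
  have h4 := h3.clm_apply hz
  simpa [ContinuousLinearMap.add_apply, add_assoc] using h4

/-- Identity-theorem substitute: a map of three variables, additive and `j`-compatible in
each slot, vanishing on `W³`, vanishes identically (since `V = W ⊕ jW`). -/
lemma vanish_ext {V : Type*} [NormedAddCommGroup V] [NormedSpace ℝ V]
    (j : V →L[ℝ] V) (W : Submodule ℝ V)
    (hcompl : IsCompl W (W.map (j : V →ₗ[ℝ] V)))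
    (T : V → V → V → V)
    (add1 : ∀ x x' y z, T (x + x') y z = T x y z + T x' y z)
    (add2 : ∀ x y y' z, T x (y + y') z = T x y z + T x y' z)
    (add3 : ∀ x y z z', T x y (z + z') = T x y z + T x y z')
    (hj1 : ∀ x y z, T (j x) y z = j (T x y z))
    (hj2 : ∀ x y z, T x (j y) z = j (T x y z))
    (hj3 : ∀ x y z, T x y (j z) = j (T x y z))
    (h0 : ∀ x ∈ W, ∀ y ∈ W, ∀ z ∈ W, T x y z = 0) :
    ∀ x y z, T x y z = 0 := by
  have hdec : ∀ v : V, ∃ a ∈ W, ∃ b ∈ W, v = a + j b := by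
    intro v
    have hv : v ∈ W ⊔ W.map (j : V →ₗ[ℝ] V) := by
      rw [hcompl.sup_eq_top]; trivial
    rcases Submodule.mem_sup.1 hv with ⟨a, ha, c, hc, h⟩
    rcases Submodule.mem_map.1 hc with ⟨b, hb, rfl⟩
    exact ⟨a, ha, b, hb, h.symm⟩
  have s3 : ∀ x ∈ W, ∀ y ∈ W, ∀ z, T x y z = 0 := by
    intro x hx y hy z
    obtain ⟨a, ha, b, hb, rfl⟩ := hdec z
    rw [add3, hj3, h0 x hx y hy a ha, h0 x hx y hy b hb, map_zero, add_zero]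
  have s2 : ∀ x ∈ W, ∀ y z, T x y z = 0 := by
    intro x hx y z
    obtain ⟨a, ha, b, hb, rfl⟩ := hdec y
    rw [add2, hj2, s3 x hx a ha z, s3 x hx b hb z, map_zero, add_zero]
  intro x y z
  obtain ⟨a, ha, b, hb, rfl⟩ := hdec x
  rw [add1, hj1, s2 a ha y z, s2 b hb y z, map_zero, add_zero]

end AuxiliaryLemmas

set_option maxHeartbeats 1000000 in
set_option synthInstance.maxHeartbeats 400000 in
/-- If the restriction `R_W` of a curvature-like tensor `R` (compatible with `j` and equal
to the complexification of `R_W`) is symmetric with respect to a compact connected group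
`G_W ⊆ SO(W)`, and `G` is the complexification of `G_W` (generated by exponentials of
`𝔥 ⊕ j𝔥`, where `𝔥` is the Lie algebra of `G_W` extended complex-linearly), then `R` is
symmetric with respect to `G`. -/
theorem stmt_4 {V : Type*} [NormedAddCommGroup V] [NormedSpace ℝ V] [FiniteDimensional ℝ V]
    (j : V →L[ℝ] V) (hj : j ∘L j = -1)
    (B : LinearMap.BilinForm ℝ V)
    (hsymm : ∀ x y : V, B x y = B y x)
    (hnd : ∀ x : V, (∀ y : V, B x y = 0) → x = 0)
    (hanti : ∀ x y : V, B (j x) (j y) = - B x y)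
    (W : Submodule ℝ V) (hcompl : IsCompl W (W.map (j : V →ₗ[ℝ] V)))
    (hWperp : ∀ x ∈ W, ∀ y ∈ W, B x (j y) = 0)
    (hpos : ∀ x ∈ W, x ≠ 0 → 0 < B x x)
    (R : V →ₗ[ℝ] V →ₗ[ℝ] V →ₗ[ℝ] V)
    (hRanti : ∀ x y : V, R x y = - R y x)
    (hRpair : ∀ x y z w : V, B (R x y z) w = B (R z w x) y)
    (hBianchi : ∀ x y z : V, R x y z + R y z x + R z x y = 0)
    (hjR : ∀ x y z : V, j (R x y z) = R (j x) y z ∧ j (R x y z) = R x y (j z))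
    (hRW : ∀ x ∈ W, ∀ y ∈ W, ∀ z ∈ W, R x y z ∈ W)
    (𝔥 : Submodule ℝ (V →L[ℝ] V))
    (h𝔥j : ∀ A ∈ 𝔥, A ∘L j = j ∘L A)
    (h𝔥W : ∀ A ∈ 𝔥, ∀ w ∈ W, A w ∈ W)
    (h𝔥skew : ∀ A ∈ 𝔥, ∀ x y : V, B (A x) y = - B x (A y))
    (GW G : Subgroup (V →L[ℝ] V)ˣ)
    (hGWcompact : IsCompact (GW : Set (V →L[ℝ] V)ˣ))
    (hGWconn : IsConnected (GW : Set (V →L[ℝ] V)ˣ))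
    (hGW : (GW : Set (V →L[ℝ] V)ˣ) = {g : (V →L[ℝ] V)ˣ | ∃ A ∈ 𝔥, (g : V →L[ℝ] V) = exp A})
    (hG : G = Subgroup.closure
      {g : (V →L[ℝ] V)ˣ | ∃ A ∈ 𝔥, ∃ A' ∈ 𝔥, (g : V →L[ℝ] V) = exp (A + j ∘L A')})
    (hsymW : ∀ g ∈ GW, ∀ x ∈ W, ∀ y ∈ W, ∀ z ∈ W,
      R ((g : V →L[ℝ] V) x) ((g : V →L[ℝ] V) y) ((g : V →L[ℝ] V) z)
        = (g : V →L[ℝ] V) (R x y z)) :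
    ∀ g ∈ G, ∀ x y z : V,
      R ((g : V →L[ℝ] V) x) ((g : V →L[ℝ] V) y) ((g : V →L[ℝ] V) z)
        = (g : V →L[ℝ] V) (R x y z) := by
  classical
  -- `j`-compatibility of `R` in each slot
  have hjR1 : ∀ x y z : V, R (j x) y z = j (R x y z) := fun x y z => ((hjR x y z).1).symm
  have hjR3 : ∀ x y z : V, R x y (j z) = j (R x y z) := fun x y z => ((hjR x y z).2).symm
  have hjR2 : ∀ x y z : V, R x (j y) z = j (R x y z) := by
    intro x y z
    have e1 : R x (j y) z = -(R (j y) x z) := by rw [hRanti x (j y)]; simp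
    have e2 : R x y z = -(R y x z) := by rw [hRanti x y]; simp
    rw [e1, hjR1, ← map_neg, ← e2]
  -- elements of 𝔥 commute with j pointwise
  have hjap : ∀ A ∈ 𝔥, ∀ v : V, A (j v) = j (A v) := by
    intro A hA v
    have h := h𝔥j A hA
    calc A (j v) = (A ∘L j) v := rfl
      _ = (j ∘L A) v := by rw [h]
      _ = j (A v) := rfl
  -- exp(tA) symmetry of R on W, for A ∈ 𝔥
  have hexpGW : ∀ A ∈ 𝔥, ∀ t : ℝ, ∀ x ∈ W, ∀ y ∈ W, ∀ z ∈ W,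
      R (exp (t • A) x) (exp (t • A) y) (exp (t • A) z)
        = exp (t • A) (R x y z) := by
    intro A hA t x hx y hy z hz
    obtain ⟨u, hu⟩ := isUnit_exp_of_mem_ball (𝕂 := ℝ) (x := t • A) ((expSeries_radius_eq_top ℝ (V →L[ℝ] V)).symm ▸ edist_lt_top _ _)
    have hmem : u ∈ GW := by
      have : u ∈ (GW : Set (V →L[ℝ] V)ˣ) := by
        rw [hGW]; exact ⟨t • A, 𝔥.smul_mem t hA, hu⟩
      exact this
    have h := hsymW u hmem x hx y hy z hz
    rw [hu] at h
    exact h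
  -- infinitesimal invariance on W³
  have hDW : ∀ A ∈ 𝔥, ∀ x ∈ W, ∀ y ∈ W, ∀ z ∈ W,
      R (A x) y z + R x (A y) z + R x y (A z) = A (R x y z) := by
    intro A hA x hx y hy z hz
    have hF : (fun s : ℝ => R (exp (s • A) x) (exp (s • A) y) (exp (s • A) z)
        - exp (s • A) (R x y z)) = fun _ => (0 : V) := by
      funext s
      rw [hexpGW A hA s x hx y hy z hz]; simp
    have hd1 := curve_deriv R A x y z 0
    have hd2 : HasDerivAt (fun s : ℝ => exp (s • A) (R x y z))
        ((exp ((0:ℝ) • A) * A) (R x y z)) 0 := by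
      simpa using (hasDerivAt_exp_smul_const A 0).clm_apply (hasDerivAt_const 0 (R x y z))
    have hd := hd1.sub hd2
    rw [show ((fun s : ℝ => R (exp (s • A) x) (exp (s • A) y) (exp (s • A) z)) - fun s : ℝ => exp (s • A) (R x y z)) = fun _ => (0:V) from hF] at hd
    have h0 := hd.unique (hasDerivAt_const (0:ℝ) (0:V))
    simp only [zero_smul, exp_zero, one_mul, ContinuousLinearMap.one_apply] at h0
    exact sub_eq_zero.mp h0
  -- infinitesimal invariance everywhere, for A ∈ 𝔥
  have hD : ∀ A ∈ 𝔥, ∀ x y z : V,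
      R (A x) y z + R x (A y) z + R x y (A z) = A (R x y z) := by
    intro A hA
    have key := vanish_ext j W hcompl
      (fun x y z => R (A x) y z + R x (A y) z + R x y (A z) - A (R x y z))
      (fun x x' y z => by simp only [map_add, LinearMap.add_apply]; abel)
      (fun x y y' z => by simp only [map_add, LinearMap.add_apply]; abel)
      (fun x y z z' => by simp only [map_add, LinearMap.add_apply]; abel)
      (fun x y z => by simp only [hjap A hA, hjR1, hjR2, hjR3, map_add, map_sub])
      (fun x y z => by simp only [hjap A hA, hjR1, hjR2, hjR3, map_add, map_sub])
      (fun x y z => by simp only [hjap A hA, hjR1, hjR2, hjR3, map_add, map_sub])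
      (fun x hx y hy z hz => sub_eq_zero.mpr (hDW A hA x hx y hy z hz))
    intro x y z
    exact sub_eq_zero.mp (key x y z)
  -- infinitesimal invariance for A + j ∘L A'
  have hDB : ∀ A ∈ 𝔥, ∀ A' ∈ 𝔥, ∀ x y z : V,
      R ((A + j ∘L A') x) y z + R x ((A + j ∘L A') y) z + R x y ((A + j ∘L A') z)
        = (A + j ∘L A') (R x y z) := by
    intro A hA A' hA' x y z
    have h1 := hD A hA x y z
    have h2 := hD A' hA' x y z
    simp only [ContinuousLinearMap.add_apply, ContinuousLinearMap.coe_comp',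
      Function.comp_apply, map_add, LinearMap.add_apply, hjR1, hjR2, hjR3]
    rw [← h1, ← h2]
    simp only [map_add]
    abel
  -- exponentiate: infinitesimal invariance gives invariance under exp
  have hgen : ∀ C : V →L[ℝ] V,
      (∀ x y z : V, R (C x) y z + R x (C y) z + R x y (C z) = C (R x y z)) →
      ∀ x y z : V, R (exp C x) (exp C y) (exp C z) = exp C (R x y z) := by
    intro C hC x y z
    have hcomm : ∀ t : ℝ, ∀ v : V, C (exp (t • C) v) = exp (t • C) (C v) := by
      intro t v
      have h : C * exp (t • C) = exp (t • C) * C :=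
        (((Commute.refl C).smul_right t).exp_right)
      calc C (exp (t • C) v) = (C * exp (t • C)) v :=
            (ContinuousLinearMap.mul_apply _ _ _).symm
        _ = (exp (t • C) * C) v := by rw [h]
        _ = exp (t • C) (C v) := ContinuousLinearMap.mul_apply _ _ _
    set F : ℝ → V := fun s =>
      exp (s • (-C)) (R (exp (s • C) x) (exp (s • C) y) (exp (s • C) z)) with hFdef
    have hder : ∀ t : ℝ, HasDerivAt F 0 t := by
      intro t
      have hc : HasDerivAt (fun s : ℝ => exp (s • (-C))) (exp (t • (-C)) * (-C)) t :=
        hasDerivAt_exp_smul_const (-C) t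
      have hu := curve_deriv R C x y z t
      have htot := hc.clm_apply hu
      have hS : R ((exp (t • C) * C) x) (exp (t • C) y) (exp (t • C) z)
          + R (exp (t • C) x) ((exp (t • C) * C) y) (exp (t • C) z)
          + R (exp (t • C) x) (exp (t • C) y) ((exp (t • C) * C) z)
          = C (R (exp (t • C) x) (exp (t • C) y) (exp (t • C) z)) := by
        simp only [ContinuousLinearMap.mul_apply]
        rw [← hcomm t x, ← hcomm t y, ← hcomm t z]
        exact hC _ _ _
      rw [hS] at htot
      have h0 : (exp (t • (-C)) * (-C))
            (R (exp (t • C) x) (exp (t • C) y) (exp (t • C) z))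
          + exp (t • (-C))
            (C (R (exp (t • C) x) (exp (t • C) y) (exp (t • C) z))) = 0 := by
        simp [ContinuousLinearMap.mul_apply, map_neg]
      rw [h0] at htot
      exact htot
    have hconst : F 1 = F 0 :=
      is_const_of_deriv_eq_zero (fun t => (hder t).differentiableAt)
        (fun t => (hder t).deriv) 1 0
    have hq : exp (-C) (R (exp C x) (exp C y) (exp C z)) = R x y z := by
      have h := hconst
      simp only [hFdef, one_smul, zero_smul, exp_zero, ContinuousLinearMap.one_apply] at h
      exact h
    have hinv : exp C * exp (-C) = (1 : V →L[ℝ] V) := by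
      rw [← exp_add_of_commute_of_mem_ball (𝕂 := ℝ) ((Commute.refl C).neg_right) ((expSeries_radius_eq_top ℝ (V →L[ℝ] V)).symm ▸ edist_lt_top _ _) ((expSeries_radius_eq_top ℝ (V →L[ℝ] V)).symm ▸ edist_lt_top _ _)]
      simp
    calc R (exp C x) (exp C y) (exp C z)
        = (1 : V →L[ℝ] V) (R (exp C x) (exp C y) (exp C z)) := by simp
      _ = (exp C * exp (-C)) (R (exp C x) (exp C y) (exp C z)) := by rw [hinv]
      _ = exp C (exp (-C) (R (exp C x) (exp C y) (exp C z))) :=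
            ContinuousLinearMap.mul_apply _ _ _
      _ = exp C (R x y z) := by rw [hq]
  -- the symmetric elements form a subgroup
  let S : Subgroup (V →L[ℝ] V)ˣ :=
    { carrier := {g : (V →L[ℝ] V)ˣ | ∀ x y z : V,
        R ((g : V →L[ℝ] V) x) ((g : V →L[ℝ] V) y) ((g : V →L[ℝ] V) z)
          = (g : V →L[ℝ] V) (R x y z)}
      one_mem' := by intro x y z; simp
      mul_mem' := by
        intro a b ha hb
        simp only [Set.mem_setOf_eq] at ha hb ⊢
        intro x y z
        simp only [Units.val_mul, ContinuousLinearMap.mul_apply]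
        rw [ha, hb]
      inv_mem' := by
        intro a ha
        simp only [Set.mem_setOf_eq] at ha ⊢
        intro x y z
        have hca : ∀ v : V, (a : V →L[ℝ] V) ((↑a⁻¹ : V →L[ℝ] V) v) = v := by
          intro v
          calc (a : V →L[ℝ] V) ((↑a⁻¹ : V →L[ℝ] V) v)
              = ((a : V →L[ℝ] V) * (↑a⁻¹ : V →L[ℝ] V)) v :=
              (ContinuousLinearMap.mul_apply _ _ _).symm
            _ = v := by rw [Units.mul_inv]; simp
        have hac : ∀ v : V, (↑a⁻¹ : V →L[ℝ] V) ((a : V →L[ℝ] V) v) = v := by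
          intro v
          calc (↑a⁻¹ : V →L[ℝ] V) ((a : V →L[ℝ] V) v)
              = ((↑a⁻¹ : V →L[ℝ] V) * (a : V →L[ℝ] V)) v :=
              (ContinuousLinearMap.mul_apply _ _ _).symm
            _ = v := by rw [Units.inv_mul]; simp
        have h := ha ((↑a⁻¹ : V →L[ℝ] V) x) ((↑a⁻¹ : V →L[ℝ] V) y) ((↑a⁻¹ : V →L[ℝ] V) z)
        rw [hca, hca, hca] at h
        have h2 := congrArg (fun v => (↑a⁻¹ : V →L[ℝ] V) v) h
        rw [hac] at h2
        exact h2.symm }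
  -- generators are in S
  have hle : G ≤ S := by
    rw [hG]
    apply (Subgroup.closure_le S).mpr
    rintro g ⟨A, hA, A', hA', hgval⟩
    intro x y z
    rw [hgval]
    exact hgen (A + j ∘L A') (hDB A hA A' hA') x y z
  intro g hg x y z
  exact hle hg x y z
end

section
/- Let (V, j, ⟨·,·⟩) be an anti-Kaehlerian vector space, R a curvature-like tensor on V satisfying j∘R(v₁,v₂) = R(jv₁,v₂) = R(v₁,v₂)∘j, and suppose R is symmetric with respect to the group G^R generated by the transformations exp(R(v₁,v₂)). Define 𝔏 := 𝔤^R ⊕ V with bracket [A₁,A₂] = A₁A₂ − A₂A₁ for A₁,A₂ ∈ 𝔤^R, [v₁,v₂] = R(v₁,v₂) for v₁,v₂ ∈ V, and [A,v] = A(v), and √−1-multiplication √−1·v = jv, √−1·R(v₁,v₂) = j∘R(v₁,v₂). Then (𝔏, [·,·]) is a complex Lie algebra and the map ρ with ρ|_{𝔤^R} = id, ρ|_V = −id is a complex involution of 𝔏. -/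
attribute [local instance 100] LieRing.ofAssociativeRing

set_option maxHeartbeats 2000000 in
/-- Given an anti-Kaehlerian space `(V, j, B)` and a curvature-like tensor `R`
compatible with `j` and symmetric with respect to `𝔤^R` (the Lie algebra generated by
the `R(v₁,v₂)`, the symmetry being expressed infinitesimally by the derivation
property of the generators), the space `𝔏 = 𝔤^R ⊕ V` with the indicated bracket and
`√-1`-multiplication is a complex Lie algebra, and `ρ = id ⊕ (-id)` is a complex
involution of `𝔏`. -/
theorem stmt_13 {V : Type*} [AddCommGroup V] [Module ℝ V]
    (j : Module.End ℝ V) (hj : j ∘ₗ j = -LinearMap.id)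
    (B : LinearMap.BilinForm ℝ V)
    (hsymm : ∀ x y : V, B x y = B y x)
    (hanti : ∀ x y : V, B (j x) (j y) = - B x y)
    (R : V →ₗ[ℝ] V →ₗ[ℝ] Module.End ℝ V)
    (hRanti : ∀ x y : V, R x y = - R y x)
    (hRpair : ∀ x y z w : V, B (R x y z) w = B (R z w x) y)
    (hRskew : ∀ x y z w : V, B (R x y z) w = - B (R x y w) z)
    (hBianchi : ∀ x y z : V, R x y z + R y z x + R z x y = 0)
    (hjR : ∀ x y : V, j ∘ₗ R x y = R (j x) y ∧ R x y ∘ₗ j = j ∘ₗ R x y)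
    (hsym : ∀ a b x y z : V,
      R a b (R x y z) - R x y (R a b z) = R (R a b x) y z + R x (R a b y) z) :
    ∃ gR : LieSubalgebra ℝ (Module.End ℝ V),
      gR = LieSubalgebra.lieSpan ℝ (Module.End ℝ V) {A | ∃ x y : V, A = R x y} ∧
      (∀ x y : V, R x y ∈ gR) ∧
      ∃ (br : (gR × V) →ₗ[ℝ] (gR × V) →ₗ[ℝ] (gR × V))
        (Iop : (gR × V) →ₗ[ℝ] (gR × V)) (ρ : (gR × V) →ₗ[ℝ] (gR × V)),
        (∀ A A' : gR, br (A, 0) (A', 0) = (⁅A, A'⁆, 0)) ∧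
        (∀ (A : gR) (v : V), br (A, 0) ((0 : gR), v) = ((0 : gR), (A : Module.End ℝ V) v)) ∧
        (∀ v w : V, (br ((0 : gR), v) ((0 : gR), w)).2 = 0 ∧
          ((br ((0 : gR), v) ((0 : gR), w)).1 : Module.End ℝ V) = R v w) ∧
        (∀ X Y : gR × V, br X Y = - br Y X) ∧
        (∀ X Y Z : gR × V, br X (br Y Z) = br (br X Y) Z + br Y (br X Z)) ∧
        (Iop ∘ₗ Iop = -LinearMap.id) ∧
        (∀ v : V, Iop ((0 : gR), v) = ((0 : gR), j v)) ∧
        (∀ A : gR, (Iop (A, (0 : V))).2 = 0 ∧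
          ((Iop (A, (0 : V))).1 : Module.End ℝ V) = j ∘ₗ (A : Module.End ℝ V)) ∧
        (∀ X Y : gR × V, br (Iop X) Y = Iop (br X Y)) ∧
        (∀ (A : gR) (v : V), ρ (A, v) = (A, -v)) ∧
        (∀ X Y : gR × V, ρ (br X Y) = br (ρ X) (ρ Y)) ∧
        (ρ ∘ₗ Iop = Iop ∘ₗ ρ) := by
  classical
  set gR : LieSubalgebra ℝ (Module.End ℝ V) :=
    LieSubalgebra.lieSpan ℝ (Module.End ℝ V) {A | ∃ x y : V, A = R x y} with hgR
  have hmem : ∀ x y : V, R x y ∈ gR := fun x y =>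
    LieSubalgebra.subset_lieSpan ⟨x, y, rfl⟩
  -- every element of gR commutes with j, stays in gR after composing with j,
  -- and acts as a derivation on R
  have key : ∀ A : Module.End ℝ V, A ∈ gR →
      (j * A = A * j ∧ j * A ∈ gR ∧
        ∀ x y : V, ⁅A, R x y⁆ = R (A x) y + R x (A y)) := by
    let S : LieSubalgebra ℝ (Module.End ℝ V) :=
      { carrier := {A | A ∈ gR ∧ j * A = A * j ∧ j * A ∈ gR ∧
          ∀ x y : V, ⁅A, R x y⁆ = R (A x) y + R x (A y)}
        zero_mem' := by
          refine ⟨gR.zero_mem, by simp, by simpa using gR.zero_mem, fun x y => by simp⟩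
        add_mem' := by
          rintro a b ⟨ha0, ha1, ha2, ha3⟩ ⟨hb0, hb1, hb2, hb3⟩
          refine ⟨gR.add_mem ha0 hb0, by rw [mul_add, add_mul, ha1, hb1],
            by rw [mul_add]; exact gR.add_mem ha2 hb2, fun x y => ?_⟩
          rw [add_lie, ha3, hb3]
          simp only [LinearMap.add_apply, map_add]
          abel
        smul_mem' := by
          rintro c a ⟨ha0, ha1, ha2, ha3⟩
          refine ⟨gR.smul_mem c ha0, by rw [mul_smul_comm, smul_mul_assoc, ha1],
            by rw [mul_smul_comm]; exact gR.smul_mem c ha2, fun x y => ?_⟩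
          rw [smul_lie, ha3]
          simp only [LinearMap.smul_apply, map_smul, smul_add]
        lie_mem' := by
          rintro a b ⟨ha0, ha1, ha2, ha3⟩ ⟨hb0, hb1, hb2, hb3⟩
          have hca : Commute j a := ha1
          have hcb : Commute j b := hb1
          refine ⟨gR.lie_mem ha0 hb0, ?_, ?_, fun x y => ?_⟩
          · have : Commute j ⁅a, b⁆ := by
              rw [Ring.lie_def]
              exact (hca.mul_right hcb).sub_right (hcb.mul_right hca)
            exact this
          · have h : j * ⁅a, b⁆ = ⁅j * a, b⁆ := by
              have hswap : j * (b * a) = b * (j * a) := by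
                rw [← mul_assoc, hcb.eq, mul_assoc]
              rw [Ring.lie_def, Ring.lie_def, mul_sub, hswap, ← mul_assoc]
            rw [h]
            exact gR.lie_mem ha2 hb0
          · simp only [lie_lie, lie_add, ha3, hb3, map_add, map_sub,
              LinearMap.add_apply]
            simp only [Ring.lie_def, LinearMap.sub_apply, Module.End.mul_apply,
              map_sub]
            abel }
    intro A hA
    have hle : gR ≤ S := by
      rw [hgR]
      apply LieSubalgebra.lieSpan_le.mpr
      rintro _ ⟨x, y, rfl⟩
      refine ⟨hmem x y, ?_, ?_, fun a b => ?_⟩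
      · rw [Module.End.mul_eq_comp, Module.End.mul_eq_comp, (hjR x y).1, (hjR x y).2,
          (hjR x y).1]
      · rw [Module.End.mul_eq_comp, (hjR x y).1]
        exact hmem _ _
      · ext z
        simp only [Ring.lie_def, LinearMap.sub_apply, Module.End.mul_apply,
          LinearMap.add_apply]
        exact hsym x y a b z
    exact (hle hA).2
  have hcomm : ∀ A : gR, j * (A : Module.End ℝ V) = (A : Module.End ℝ V) * j :=
    fun A => (key _ A.2).1
  have hder : ∀ (A : gR) (x y : V),
      ⁅(A : Module.End ℝ V), R x y⁆ = R ((A : Module.End ℝ V) x) y + R x ((A : Module.End ℝ V) y) :=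
    fun A x y => (key _ A.2).2.2 x y
  have hjmul : ∀ x y : V, j * R x y = R (j x) y := fun x y => by
    rw [Module.End.mul_eq_comp, (hjR x y).1]
  -- the map A ↦ j ∘ A on gR
  let Jg : gR →ₗ[ℝ] gR :=
    { toFun := fun A => ⟨j * (A : Module.End ℝ V), (key _ A.2).2.1⟩
      map_add' := fun a b => Subtype.ext
        (show j * ((a : Module.End ℝ V) + b) = j * a + j * b from mul_add j _ _)
      map_smul' := fun c a => Subtype.ext
        (show j * (c • (a : Module.End ℝ V)) = c • (j * a) from mul_smul_comm c j _) }
  have hJg : ∀ A : gR, ((Jg A : gR) : Module.End ℝ V) = j * (A : Module.End ℝ V) :=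
    fun _ => rfl
  -- the bracket
  let f : gR × V → gR × V → gR × V := fun X Y =>
    (⁅X.1, Y.1⁆ + ⟨R X.2 Y.2, hmem X.2 Y.2⟩,
      (X.1 : Module.End ℝ V) Y.2 - (Y.1 : Module.End ℝ V) X.2)
  have hf : ∀ (A B : gR) (u v : V),
      f (A, u) (B, v) = (⁅A, B⁆ + ⟨R u v, hmem u v⟩,
        (A : Module.End ℝ V) v - (B : Module.End ℝ V) u) := fun _ _ _ _ => rfl
  have hadd1 : ∀ m n p, f (m + n) p = f m p + f n p := by
    rintro ⟨A, u⟩ ⟨A', u'⟩ ⟨B, v⟩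
    rw [Prod.mk_add_mk, hf, hf, hf, Prod.mk_add_mk]
    refine Prod.ext (Subtype.ext ?_) ?_
    · show ⁅(↑A + ↑A' : Module.End ℝ V), (↑B : Module.End ℝ V)⁆ + R (u + u') v =
        (⁅(↑A : Module.End ℝ V), (↑B : Module.End ℝ V)⁆ + R u v) +
          (⁅(↑A' : Module.End ℝ V), (↑B : Module.End ℝ V)⁆ + R u' v)
      simp only [add_lie, map_add, LinearMap.add_apply]
      abel
    · show (↑A + ↑A' : Module.End ℝ V) v - (↑B : Module.End ℝ V) (u + u') =
        ((↑A : Module.End ℝ V) v - (↑B : Module.End ℝ V) u) +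
          ((↑A' : Module.End ℝ V) v - (↑B : Module.End ℝ V) u')
      simp only [map_add, LinearMap.add_apply]
      abel
  have hsmul1 : ∀ (c : ℝ) m n, f (c • m) n = c • f m n := by
    rintro c ⟨A, u⟩ ⟨B, v⟩
    rw [Prod.smul_mk, hf, hf, Prod.smul_mk]
    refine Prod.ext (Subtype.ext ?_) ?_
    · show ⁅c • (↑A : Module.End ℝ V), (↑B : Module.End ℝ V)⁆ + R (c • u) v =
        c • (⁅(↑A : Module.End ℝ V), (↑B : Module.End ℝ V)⁆ + R u v)
      simp only [smul_lie, map_smul, LinearMap.smul_apply, smul_add]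
    · show (c • (↑A : Module.End ℝ V)) v - (↑B : Module.End ℝ V) (c • u) =
        c • ((↑A : Module.End ℝ V) v - (↑B : Module.End ℝ V) u)
      simp only [LinearMap.smul_apply, map_smul, smul_sub]
  have hadd2 : ∀ m n p, f m (n + p) = f m n + f m p := by
    rintro ⟨A, u⟩ ⟨B, v⟩ ⟨B', v'⟩
    rw [Prod.mk_add_mk, hf, hf, hf, Prod.mk_add_mk]
    refine Prod.ext (Subtype.ext ?_) ?_
    · show ⁅(↑A : Module.End ℝ V), (↑B + ↑B' : Module.End ℝ V)⁆ + R u (v + v') =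
        (⁅(↑A : Module.End ℝ V), (↑B : Module.End ℝ V)⁆ + R u v) +
          (⁅(↑A : Module.End ℝ V), (↑B' : Module.End ℝ V)⁆ + R u v')
      simp only [lie_add, map_add]
      abel
    · show (↑A : Module.End ℝ V) (v + v') - (↑B + ↑B' : Module.End ℝ V) u =
        ((↑A : Module.End ℝ V) v - (↑B : Module.End ℝ V) u) +
          ((↑A : Module.End ℝ V) v' - (↑B' : Module.End ℝ V) u)
      simp only [map_add, LinearMap.add_apply]
      abel
  have hsmul2 : ∀ (c : ℝ) m n, f m (c • n) = c • f m n := by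
    rintro c ⟨A, u⟩ ⟨B, v⟩
    rw [Prod.smul_mk, hf, hf, Prod.smul_mk]
    refine Prod.ext (Subtype.ext ?_) ?_
    · show ⁅(↑A : Module.End ℝ V), c • (↑B : Module.End ℝ V)⁆ + R u (c • v) =
        c • (⁅(↑A : Module.End ℝ V), (↑B : Module.End ℝ V)⁆ + R u v)
      simp only [lie_smul, map_smul, smul_add]
    · show (↑A : Module.End ℝ V) (c • v) - (c • (↑B : Module.End ℝ V)) u =
        c • ((↑A : Module.End ℝ V) v - (↑B : Module.End ℝ V) u)
      simp only [LinearMap.smul_apply, map_smul, smul_sub]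
  refine ⟨gR, hgR, hmem, LinearMap.mk₂ ℝ f hadd1 hsmul1 hadd2 hsmul2,
    LinearMap.prodMap Jg j, LinearMap.prodMap LinearMap.id (-LinearMap.id),
    ?_, ?_, ?_, ?_, ?_, ?_, ?_, ?_, ?_, ?_, ?_, ?_⟩
  · -- br (A,0) (A',0) = (⁅A,A'⁆, 0)
    intro A A'
    rw [LinearMap.mk₂_apply, hf]
    refine Prod.ext (Subtype.ext ?_) ?_
    · show ⁅(↑A : Module.End ℝ V), (↑A' : Module.End ℝ V)⁆ + R 0 0 =
        ⁅(↑A : Module.End ℝ V), (↑A' : Module.End ℝ V)⁆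
      simp
    · show (↑A : Module.End ℝ V) 0 - (↑A' : Module.End ℝ V) 0 = 0
      simp
  · -- br (A,0) (0,v) = (0, A v)
    intro A v
    rw [LinearMap.mk₂_apply, hf]
    refine Prod.ext (Subtype.ext ?_) ?_
    · show ⁅(↑A : Module.End ℝ V), ((0 : gR) : Module.End ℝ V)⁆ + R 0 v =
        ((0 : gR) : Module.End ℝ V)
      simp
    · show (↑A : Module.End ℝ V) v - ((0 : gR) : Module.End ℝ V) 0 =
        (↑A : Module.End ℝ V) v
      simp
  · -- br (0,v) (0,w) = (R v w, 0)
    intro v w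
    rw [LinearMap.mk₂_apply, hf]
    refine ⟨?_, ?_⟩
    · show ((0 : gR) : Module.End ℝ V) w - ((0 : gR) : Module.End ℝ V) v = 0
      simp
    · show ⁅((0 : gR) : Module.End ℝ V), ((0 : gR) : Module.End ℝ V)⁆ + R v w = R v w
      simp
  · -- antisymmetry
    rintro ⟨A, u⟩ ⟨B, v⟩
    rw [LinearMap.mk₂_apply, LinearMap.mk₂_apply, hf, hf, Prod.neg_mk]
    refine Prod.ext (Subtype.ext ?_) ?_
    · show ⁅(↑A : Module.End ℝ V), (↑B : Module.End ℝ V)⁆ + R u v =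
        -(⁅(↑B : Module.End ℝ V), (↑A : Module.End ℝ V)⁆ + R v u)
      rw [hRanti v u, ← lie_skew]
      abel
    · show (↑A : Module.End ℝ V) v - (↑B : Module.End ℝ V) u =
        -((↑B : Module.End ℝ V) u - (↑A : Module.End ℝ V) v)
      abel
  · -- Leibniz identity
    rintro ⟨A, u⟩ ⟨B, v⟩ ⟨C, w⟩
    rw [LinearMap.mk₂_apply, LinearMap.mk₂_apply, hf, LinearMap.mk₂_apply, hf,
      LinearMap.mk₂_apply, hf, LinearMap.mk₂_apply, hf, LinearMap.mk₂_apply, hf,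
      Prod.mk_add_mk]
    refine Prod.ext (Subtype.ext ?_) ?_
    · show ⁅(↑A : Module.End ℝ V),
            ⁅(↑B : Module.End ℝ V), (↑C : Module.End ℝ V)⁆ + R v w⁆ +
          R u ((↑B : Module.End ℝ V) w - (↑C : Module.End ℝ V) v) =
        (⁅⁅(↑A : Module.End ℝ V), (↑B : Module.End ℝ V)⁆ + R u v,
            (↑C : Module.End ℝ V)⁆ +
          R ((↑A : Module.End ℝ V) v - (↑B : Module.End ℝ V) u) w) +
        (⁅(↑B : Module.End ℝ V),
            ⁅(↑A : Module.End ℝ V), (↑C : Module.End ℝ V)⁆ + R u w⁆ +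
          R v ((↑A : Module.End ℝ V) w - (↑C : Module.End ℝ V) u))
      have e1 : ⁅(↑A : Module.End ℝ V), R v w⁆ =
          R ((↑A : Module.End ℝ V) v) w + R v ((↑A : Module.End ℝ V) w) := hder A v w
      have e2 : ⁅(↑B : Module.End ℝ V), R u w⁆ =
          R ((↑B : Module.End ℝ V) u) w + R u ((↑B : Module.End ℝ V) w) := hder B u w
      have e3 : ⁅R u v, (↑C : Module.End ℝ V)⁆ =
          R v ((↑C : Module.End ℝ V) u) - R u ((↑C : Module.End ℝ V) v) := by
        rw [← lie_skew, hder C u v, hRanti ((↑C : Module.End ℝ V) u) v]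
        abel
      rw [lie_add, lie_add, add_lie]
      simp only [lie_lie, e1, e2, e3, map_sub, LinearMap.sub_apply]
      abel
    · show (↑A : Module.End ℝ V) ((↑B : Module.End ℝ V) w - (↑C : Module.End ℝ V) v) -
          ((⁅B, C⁆ + (⟨R v w, hmem v w⟩ : gR) : gR) : Module.End ℝ V) u =
        ((((⁅A, B⁆ + (⟨R u v, hmem u v⟩ : gR) : gR) : Module.End ℝ V) w -
            (↑C : Module.End ℝ V) ((↑A : Module.End ℝ V) v - (↑B : Module.End ℝ V) u)) +
          ((↑B : Module.End ℝ V) ((↑A : Module.End ℝ V) w - (↑C : Module.End ℝ V) u) -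
            (((⁅A, C⁆ + (⟨R u w, hmem u w⟩ : gR) : gR) : Module.End ℝ V) v)))
      have e5 : R u w v = - R w u v := by rw [hRanti u w]; simp
      have e6 : R v w u = - R u v w - R w u v := by
        have h := hBianchi u v w
        rw [add_assoc] at h
        exact eq_sub_of_add_eq (eq_neg_of_add_eq_zero_right h)
      show (↑A : Module.End ℝ V) ((↑B : Module.End ℝ V) w - (↑C : Module.End ℝ V) v) -
          (⁅(↑B : Module.End ℝ V), (↑C : Module.End ℝ V)⁆ + R v w) u =
        (((⁅(↑A : Module.End ℝ V), (↑B : Module.End ℝ V)⁆ + R u v) w -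
            (↑C : Module.End ℝ V) ((↑A : Module.End ℝ V) v - (↑B : Module.End ℝ V) u)) +
          ((↑B : Module.End ℝ V) ((↑A : Module.End ℝ V) w - (↑C : Module.End ℝ V) u) -
            ((⁅(↑A : Module.End ℝ V), (↑C : Module.End ℝ V)⁆ + R u w) v)))
      simp only [LinearMap.add_apply, Ring.lie_def, LinearMap.sub_apply,
        Module.End.mul_apply, map_sub]
      rw [e5, e6]
      abel
  · -- Iop ∘ Iop = -id
    apply LinearMap.ext
    rintro ⟨A, v⟩
    have hjj : j * j = -1 := by
      rw [Module.End.mul_eq_comp, hj]; rfl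
    refine Prod.ext (Subtype.ext ?_) ?_
    · show ((Jg (Jg A) : gR) : Module.End ℝ V) = ((-A : gR) : Module.End ℝ V)
      rw [hJg, hJg, ← mul_assoc, hjj]
      show -1 * (↑A : Module.End ℝ V) = -(↑A : Module.End ℝ V)
      rw [neg_one_mul]
    · show j (j v) = -v
      have := LinearMap.congr_fun hj v
      simpa using this
  · -- Iop (0, v) = (0, j v)
    intro v
    refine Prod.ext (Subtype.ext ?_) ?_
    · show ((Jg 0 : gR) : Module.End ℝ V) = ((0 : gR) : Module.End ℝ V)
      rw [map_zero]
    · rfl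
  · -- Iop (A, 0)
    intro A
    refine ⟨?_, ?_⟩
    · show j 0 = 0
      simp
    · show ((Jg A : gR) : Module.End ℝ V) = j ∘ₗ (A : Module.End ℝ V)
      rw [hJg, Module.End.mul_eq_comp]
  · -- br (Iop X) Y = Iop (br X Y)
    rintro ⟨A, u⟩ ⟨B, v⟩
    show (LinearMap.mk₂ ℝ f hadd1 hsmul1 hadd2 hsmul2) (Jg A, j u) (B, v) =
      LinearMap.prodMap Jg j ((LinearMap.mk₂ ℝ f hadd1 hsmul1 hadd2 hsmul2) (A, u) (B, v))
    rw [LinearMap.mk₂_apply, hf, LinearMap.mk₂_apply, hf]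
    refine Prod.ext (Subtype.ext ?_) ?_
    · show ⁅((Jg A : gR) : Module.End ℝ V), (↑B : Module.End ℝ V)⁆ + R (j u) v =
        ((Jg (⁅A, B⁆ + ⟨R u v, hmem u v⟩) : gR) : Module.End ℝ V)
      rw [hJg, hJg]
      show ⁅j * (↑A : Module.End ℝ V), (↑B : Module.End ℝ V)⁆ + R (j u) v =
        j * (⁅(↑A : Module.End ℝ V), (↑B : Module.End ℝ V)⁆ + R u v)
      rw [mul_add, hjmul u v]
      congr 1
      have hswap : j * ((↑B : Module.End ℝ V) * ↑A) = ↑B * (j * ↑A) := by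
        rw [← mul_assoc, hcomm B, mul_assoc]
      rw [Ring.lie_def, Ring.lie_def, mul_sub, hswap, ← mul_assoc, mul_assoc]
    · show ((Jg A : gR) : Module.End ℝ V) v - (↑B : Module.End ℝ V) (j u) =
        j ((↑A : Module.End ℝ V) v - (↑B : Module.End ℝ V) u)
      rw [hJg, map_sub]
      congr 1
      have h2 := LinearMap.congr_fun (hcomm B) u
      simpa only [Module.End.mul_apply] using h2.symm
  · -- ρ (A, v) = (A, -v)
    intro A v
    refine Prod.ext rfl ?_
    show (-LinearMap.id : V →ₗ[ℝ] V) v = -v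
    simp
  · -- ρ (br X Y) = br (ρ X) (ρ Y)
    rintro ⟨A, u⟩ ⟨B, v⟩
    show LinearMap.prodMap LinearMap.id (-LinearMap.id)
        ((LinearMap.mk₂ ℝ f hadd1 hsmul1 hadd2 hsmul2) (A, u) (B, v)) =
      (LinearMap.mk₂ ℝ f hadd1 hsmul1 hadd2 hsmul2) (A, -u) (B, -v)
    rw [LinearMap.mk₂_apply, hf, LinearMap.mk₂_apply, hf]
    refine Prod.ext (Subtype.ext ?_) ?_
    · show ⁅(↑A : Module.End ℝ V), (↑B : Module.End ℝ V)⁆ + R u v =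
        ⁅(↑A : Module.End ℝ V), (↑B : Module.End ℝ V)⁆ + R (-u) (-v)
      simp
    · show (-LinearMap.id : V →ₗ[ℝ] V) ((↑A : Module.End ℝ V) v - (↑B : Module.End ℝ V) u) =
        (↑A : Module.End ℝ V) (-v) - (↑B : Module.End ℝ V) (-u)
      simp only [LinearMap.neg_apply, LinearMap.id_apply, map_neg]
      abel
  · -- ρ ∘ Iop = Iop ∘ ρ
    apply LinearMap.ext
    rintro ⟨A, v⟩
    refine Prod.ext rfl ?_
    show (-LinearMap.id : V →ₗ[ℝ] V) (j v) = j ((-LinearMap.id : V →ₗ[ℝ] V) v)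
    simp
end

section
/- Let M be a submanifold of a real analytic manifold N, and suppose f is a real holomorphic vector field on a complex manifold P (i.e., f − √−1 J f is holomorphic, where J is the complex structure). If L ⊆ P is a totally real submanifold with dim_ℝ L = dim_ℂ P and f vanishes on L, then f vanishes identically on the connected component of P containing L. -/
/-- Auxiliary: a holomorphic function on an open set of `ℂⁿ` that vanishes in a
neighborhood of the center of a ball contained in the set vanishes on the whole ball.
Proved by slicing along complex lines and using the one-variable identity theorem. -/
theorem aux_ball_zero {n : ℕ} {U : Set (Fin n → ℂ)} (hU : IsOpen U)
    {f : (Fin n → ℂ) → (Fin n → ℂ)} (hf : DifferentiableOn ℂ f U)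
    {q : Fin n → ℂ} {s : ℝ} (hs : 0 < s) (hsub : Metric.ball q s ⊆ U)
    (hev : ∀ᶠ w in nhds q, f w = 0) :
    ∀ z ∈ Metric.ball q s, f z = 0 := by
  intro z hz
  by_cases hzq : z = q
  · subst hzq; exact hev.self_of_nhds
  have hnz : ‖z - q‖ ≠ 0 := by
    simpa [sub_eq_zero] using hzq
  have hnorm : ‖z - q‖ < s := by
    simpa [dist_eq_norm] using Metric.mem_ball.1 hz
  set R : ℝ := s / ‖z - q‖ with hR
  have hRpos : 0 < R := div_pos hs (lt_of_le_of_ne (norm_nonneg _) (Ne.symm hnz))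
  set L : ℂ → (Fin n → ℂ) := fun t => q + t • (z - q) with hL
  have hLcont : Continuous L := by continuity
  have hLmem : ∀ t : ℂ, ‖t‖ < R → L t ∈ Metric.ball q s := by
    intro t ht
    rw [Metric.mem_ball, dist_eq_norm]
    have : ‖L t - q‖ = ‖t‖ * ‖z - q‖ := by
      simp [hL, norm_smul]
    rw [this]
    calc ‖t‖ * ‖z - q‖ < R * ‖z - q‖ := by
          apply mul_lt_mul_of_pos_right ht
          exact lt_of_le_of_ne (norm_nonneg _) (Ne.symm hnz)
      _ = s := by rw [hR]; field_simp
  set g : ℂ → (Fin n → ℂ) := fun t => f (L t) with hg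
  have hgd : DifferentiableOn ℂ g (Metric.ball (0 : ℂ) R) := by
    intro t ht
    have htR : ‖t‖ < R := by simpa [dist_eq_norm] using Metric.mem_ball.1 ht
    have hmem : L t ∈ U := hsub (hLmem t htR)
    have hfd : DifferentiableAt ℂ f (L t) :=
      (hf _ hmem).differentiableAt (hU.mem_nhds hmem)
    have hLd : DifferentiableAt ℂ L t := by
      apply DifferentiableAt.add (differentiableAt_const q)
      exact (differentiableAt_fun_id (𝕜 := ℂ) (x := t)).smul (differentiableAt_const (z - q))
    exact (hfd.comp t hLd).differentiableWithinAt
  have hga : AnalyticOnNhd ℂ g (Metric.ball (0 : ℂ) R) :=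
    hgd.analyticOnNhd Metric.isOpen_ball
  have hgev : g =ᶠ[nhds (0 : ℂ)] 0 := by
    have hL0 : Filter.Tendsto L (nhds 0) (nhds q) := by
      have : L 0 = q := by simp [hL]
      simpa [this] using hLcont.tendsto 0
    filter_upwards [hL0.eventually hev] with t ht
    exact ht
  have heq : Set.EqOn g 0 (Metric.ball (0 : ℂ) R) :=
    hga.eqOn_zero_of_preconnected_of_eventuallyEq_zero
      (convex_ball (0 : ℂ) R).isPreconnected (Metric.mem_ball_self hRpos) hgev
  have h1 : (1 : ℂ) ∈ Metric.ball (0 : ℂ) R := by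
    rw [Metric.mem_ball, dist_eq_norm]
    simp only [sub_zero, norm_one]
    rw [hR, lt_div_iff₀ (lt_of_le_of_ne (norm_nonneg _) (Ne.symm hnz))]
    simpa using hnorm
  have := heq h1
  simpa [hg, hL] using this

/-- Identity theorem: a (real) holomorphic vector field `f` on an open set
`U ⊆ ℂⁿ` that vanishes on the maximal-dimensional totally real submanifold
`U ∩ ℝⁿ` vanishes identically on the connected component of `U` containing it. -/
theorem stmt_14 (n : ℕ) (U : Set (Fin n → ℂ)) (hU : IsOpen U)
    (f : (Fin n → ℂ) → (Fin n → ℂ))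
    (hf : DifferentiableOn ℂ f U)
    (p₀ : Fin n → ℂ) (hp₀ : p₀ ∈ U) (hp₀real : ∀ k, (p₀ k).im = 0)
    (hvanish : ∀ z ∈ U, (∀ k, (z k).im = 0) → f z = 0) :
    ∀ z ∈ connectedComponentIn U p₀, f z = 0 := by
  obtain ⟨r, hr, hrU⟩ := Metric.isOpen_iff.1 hU p₀ hp₀
  -- Step 1: by induction on m, f vanishes on points of the ball whose coordinates
  -- of index ≥ m are real.
  have key : ∀ m : ℕ, ∀ z ∈ Metric.ball p₀ r,
      (∀ k : Fin n, m ≤ (k : ℕ) → (z k).im = 0) → f z = 0 := by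
    intro m
    induction m with
    | zero =>
      intro z hz hreal
      exact hvanish z (hrU hz) fun k => hreal k (Nat.zero_le _)
    | succ m ih =>
      intro z hz hreal
      by_cases hm : m < n
      · set M : Fin n := ⟨m, hm⟩ with hM
        set g : ℂ → (Fin n → ℂ) := fun w => f (Function.update z M w) with hg
        have hcoord : ∀ k : Fin n, dist (z k) (p₀ k) < r := by
          intro k
          exact lt_of_le_of_lt (dist_le_pi_dist z p₀ k) hz
        have hmem : ∀ w : ℂ, dist w (p₀ M) < r →
            Function.update z M w ∈ Metric.ball p₀ r := by
          intro w hw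
          rw [Metric.mem_ball]
          refine (dist_pi_lt_iff hr).2 fun k => ?_
          by_cases hk : k = M
          · subst hk; simpa using hw
          · simpa [Function.update_of_ne hk] using hcoord k
        have hgd : DifferentiableOn ℂ g (Metric.ball (p₀ M) r) := by
          intro w hw
          have hu : DifferentiableAt ℂ (fun w : ℂ => Function.update z M w) w := by
            apply differentiableAt_pi.2
            intro k
            by_cases hk : k = M
            · subst hk; simpa using differentiableAt_id
            · simpa [Function.update_of_ne hk] using differentiableAt_const (z k)
          have hmemU : Function.update z M w ∈ U := hrU (hmem w (Metric.mem_ball.1 hw))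
          have hfw : DifferentiableAt ℂ f (Function.update z M w) :=
            (hf _ hmemU).differentiableAt (hU.mem_nhds hmemU)
          exact (hfw.comp w hu).differentiableWithinAt
        have hga : AnalyticOnNhd ℂ g (Metric.ball (p₀ M) r) :=
          hgd.analyticOnNhd Metric.isOpen_ball
        -- g vanishes on real points of the disc
        have hgreal : ∀ w : ℂ, dist w (p₀ M) < r → w.im = 0 → g w = 0 := by
          intro w hw hwim
          apply ih _ (hmem w hw)
          intro k hk
          by_cases hkM : k = M
          · subst hkM; simpa using hwim
          · rw [Function.update_of_ne hkM]
            refine hreal k ?_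
            rcases lt_or_eq_of_le hk with h | h
            · exact h
            · exact absurd (Fin.val_injective h.symm : (k : Fin n) = M) hkM
        -- frequently zero near p₀ M
        have hfreq : ∃ᶠ w in nhdsWithin (p₀ M) {(p₀ M)}ᶜ, g w = 0 := by
          have htend : Filter.Tendsto (fun j : ℕ => p₀ M + ((r / (j + 2) : ℝ) : ℂ))
              Filter.atTop (nhdsWithin (p₀ M) {(p₀ M)}ᶜ) := by
            rw [tendsto_nhdsWithin_iff]
            constructor
            · have h1 : Filter.Tendsto (fun j : ℕ => (r / (j + 2) : ℝ)) Filter.atTop (nhds 0) := by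
                apply Filter.Tendsto.div_atTop tendsto_const_nhds
                exact Filter.tendsto_atTop_add_const_right _ 2 tendsto_natCast_atTop_atTop
              have h2 : Filter.Tendsto (fun j : ℕ => ((r / (j + 2) : ℝ) : ℂ))
                  Filter.atTop (nhds 0) := by
                have h2' := (Complex.continuous_ofReal.tendsto 0).comp h1
                rw [Complex.ofReal_zero] at h2'
                exact h2'
              simpa using tendsto_const_nhds.add h2
            · refine Filter.Eventually.of_forall fun j => ?_
              simp only [Set.mem_compl_iff, Set.mem_singleton_iff]
              intro h
              have h3 : ((r / (j + 2) : ℝ) : ℂ) = 0 := by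
                have := congrArg (fun w => w - p₀ M) h
                simpa using this
              have h4 : (r / (j + 2) : ℝ) = 0 := by exact_mod_cast h3
              have hpos : (0 : ℝ) < r / (j + 2) := by positivity
              linarith
          apply htend.frequently
          refine (Filter.Eventually.of_forall fun j => ?_).frequently
          apply hgreal
          · have hle : r / ((j : ℝ) + 2) ≤ r / 2 := by
              apply div_le_div_of_nonneg_left (le_of_lt hr) (by norm_num)
              have : (0 : ℝ) ≤ (j : ℝ) := Nat.cast_nonneg j
              linarith
            have hd : dist (p₀ M + ((r / (j + 2) : ℝ) : ℂ)) (p₀ M) = |r / ((j : ℝ) + 2)| := by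
              rw [dist_eq_norm]
              have he : p₀ M + ((r / (j + 2) : ℝ) : ℂ) - p₀ M = ((r / (j + 2) : ℝ) : ℂ) := by
                ring
              rw [he, Complex.norm_real, Real.norm_eq_abs]
            rw [hd, abs_of_pos (by positivity)]
            linarith
          · show (p₀ M + ((r / (j + 2) : ℝ) : ℂ)).im = 0
            rw [Complex.add_im, hp₀real M, Complex.ofReal_im, add_zero]
        have hzero : Set.EqOn g 0 (Metric.ball (p₀ M) r) :=
          hga.eqOn_zero_of_preconnected_of_frequently_eq_zero
            (convex_ball (p₀ M) r).isPreconnected (Metric.mem_ball_self hr) hfreq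
        have := hzero (Metric.mem_ball.2 (hcoord M))
        simpa [hg, Function.update_eq_self] using this
      · apply ih _ hz
        intro k hk
        exact absurd (lt_of_le_of_lt hk k.isLt) hm
  -- Step 2: f vanishes on the whole ball, hence eventually at p₀.
  have hev : f =ᶠ[nhds p₀] 0 := by
    filter_upwards [Metric.ball_mem_nhds p₀ hr] with z hz
    exact key n z hz fun k hk => absurd (lt_of_le_of_lt hk k.isLt) (lt_irrefl n)
  -- Step 3: clopen argument on the connected component.
  set C := connectedComponentIn U p₀ with hC
  have hconn : IsPreconnected C :=
    (isConnected_connectedComponentIn_iff.2 hp₀).isPreconnected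
  have hsubU : C ⊆ U := connectedComponentIn_subset U p₀
  set W : Set (Fin n → ℂ) := {z | ∀ᶠ w in nhds z, f w = 0} with hW
  have hWopen : IsOpen W := isOpen_setOf_eventually_nhds
  -- if z ∈ C is in the closure of W, then z ∈ W
  have hclosure : ∀ z ∈ C, z ∈ closure W → z ∈ W := by
    intro z hzC hzcl
    obtain ⟨s, hs, hsU⟩ := Metric.isOpen_iff.1 hU z (hsubU hzC)
    obtain ⟨q, hqW, hqd⟩ := Metric.mem_closure_iff.1 hzcl (s / 2) (by positivity)
    have hqd' : dist q z < s / 2 := by rwa [dist_comm] at hqd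
    have hball : Metric.ball q (s - dist q z) ⊆ U := by
      intro w hw
      apply hsU
      rw [Metric.mem_ball] at hw ⊢
      calc dist w z ≤ dist w q + dist q z := dist_triangle _ _ _
        _ < (s - dist q z) + dist q z := by linarith
        _ = s := by ring
    have hspos : 0 < s - dist q z := by linarith
    have hzball : z ∈ Metric.ball q (s - dist q z) := by
      rw [Metric.mem_ball, dist_comm]
      linarith
    have hzero : ∀ w ∈ Metric.ball q (s - dist q z), f w = 0 :=
      aux_ball_zero hU hf hspos hball hqW
    rw [hW, Set.mem_setOf_eq]
    filter_upwards [Metric.isOpen_ball.mem_nhds hzball] with w hw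
    exact hzero w hw
  -- preconnectedness forces C ⊆ W
  have hCW : C ⊆ W := by
    by_contra hnot
    have hsubWW : C ⊆ W ∪ (closure W)ᶜ := by
      intro z hz
      by_cases h : z ∈ closure W
      · exact Or.inl (hclosure z hz h)
      · exact Or.inr h
    have hne1 : (C ∩ W).Nonempty := ⟨p₀, mem_connectedComponentIn hp₀, hev⟩
    have hne2 : (C ∩ (closure W)ᶜ).Nonempty := by
      obtain ⟨z, hzC, hzW⟩ := Set.not_subset.1 hnot
      refine ⟨z, hzC, ?_⟩
      intro h
      exact hzW (hclosure z hzC h)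
    obtain ⟨x, hxC, hxW, hxW'⟩ := hconn W (closure W)ᶜ hWopen isClosed_closure.isOpen_compl
      hsubWW hne1 hne2
    exact hxW' (subset_closure hxW)
  intro z hz
  exact ((hCW hz).self_of_nhds)
end

section
/- Let 𝔭 be a real vector space with complex structure j and an anti-Kaehlerian inner product, let 𝔞 be an abelian subspace (for a curvature-like bracket) acting on 𝔭 via operators ad(a)², with root space decomposition 𝔭 = 𝔞 ⊕ Σ_{α∈Δ₊} 𝔭_α where ad(a)²X = α^ℂ(a)²X for X ∈ 𝔭_α, a ∈ 𝔞. Let u ∈ 𝔞 with α^ℂ(u) ≠ 0 for all α ∈ Δ₊, let M be the orbit of u under a group K acting by isometries preserving this structure with T_uM = Σ_{α∈Δ₊} 𝔭_α and T_u^⊥M = 𝔞. Then for v ∈ 𝔞 the shape operator of M satisfies A_v|_{𝔭_α} = −(α^ℂ(v)/α^ℂ(u))·id, and in particular A_v is complex-diagonalizable with respect to the decomposition into the 𝔭_α. -/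
/-- Principal orbits of an aks-representation are proper anti-Kaehlerian
isoparametric: in the root space decomposition `𝔭 = 𝔞 ⊕ Σ_α 𝔭_α` (with complex
roots `α^ℂ`), for a regular point `u ∈ 𝔞` and a normal vector `v ∈ 𝔞`, the shape
operator `A_v` of the orbit `M = K·u` acts on `𝔭_α` as the complex scalar
`-(α^ℂ(v)/α^ℂ(u))`.  Tangent vectors of `M` at `u` are realized as `X = ⁅ξ, u⁆`
(`ξ ∈ 𝔨`) and `A_v X = -⁅ξ, v⁆`; the conclusion states
`⁅ξ, v⁆ = (α^ℂ(v)/α^ℂ(u)) • X` (complex scalar multiplication via `j`), so `A_v`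
is complex-diagonalizable with the stated eigenvalues. -/
theorem stmt_15 {L : Type*} [LieRing L] [LieAlgebra ℝ L]
    (k p : Submodule ℝ L)
    (hkp : ∀ x ∈ k, ∀ y ∈ p, ⁅x, y⁆ ∈ p)
    (hpp : ∀ x ∈ p, ∀ y ∈ p, ⁅x, y⁆ ∈ k)
    (j : Module.End ℝ L) (hjp : ∀ x ∈ p, j x ∈ p)
    (hj : ∀ x ∈ p, j (j x) = -x)
    (a : Submodule ℝ L) (hap : a ≤ p)
    (habelian : ∀ x ∈ a, ∀ y ∈ a, ⁅x, y⁆ = 0)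
    (hja : ∀ x ∈ a, j x ∈ a)
    {ι : Type*} (αc : ι → (L →ₗ[ℝ] ℂ))
    (hαj : ∀ i, ∀ x ∈ a, αc i (j x) = Complex.I * αc i x)
    (pα : ι → Submodule ℝ L) (hpα : ∀ i, pα i ≤ p)
    (hroot : ∀ i, ∀ X ∈ pα i, ∀ z ∈ a,
      ⁅z, ⁅z, X⁆⁆ = ((αc i z) ^ 2).re • X + ((αc i z) ^ 2).im • j X)
    (hdecomp : p ≤ a ⊔ ⨆ i, pα i)
    (u : L) (hu : u ∈ a) (hreg : ∀ i, αc i u ≠ 0)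
    (v : L) (hv : v ∈ a)
    (hcent : ∀ ξ ∈ k, ⁅ξ, u⁆ = 0 → ∀ w ∈ a, ⁅ξ, w⁆ = 0) :
    ∀ i, ∀ X ∈ pα i, ∀ ξ ∈ k, ⁅ξ, u⁆ = X →
      ⁅ξ, v⁆ = (αc i v / αc i u).re • X + (αc i v / αc i u).im • j X := by
  intro i X hX ξ hξ hξu
  set A := αc i u with hA
  set B := αc i v with hB
  have hA0 : A ≠ 0 := hreg i
  have hd : A.re * A.re + A.im * A.im ≠ 0 := by
    have := Complex.normSq_pos.mpr hA0
    rw [Complex.normSq_apply] at this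
    exact ne_of_gt this
  -- polarization lemma
  have pol : ∀ z ∈ a, ∀ w ∈ a, ⁅z, ⁅w, X⁆⁆ =
      (αc i z * αc i w).re • X + (αc i z * αc i w).im • j X := by
    intro z hz w hw
    have hcom : ⁅z, ⁅w, X⁆⁆ = ⁅w, ⁅z, X⁆⁆ := by
      rw [leibniz_lie z w X, habelian z hz w hw, zero_lie, zero_add]
    have h1 := hroot i X hX z hz
    have h2 := hroot i X hX w hw
    have h3 := hroot i X hX (z + w) (a.add_mem hz hw)
    rw [map_add] at h3
    have hexp : ⁅z + w, ⁅z + w, X⁆⁆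
        = ⁅z, ⁅z, X⁆⁆ + (⁅z, ⁅w, X⁆⁆ + ⁅z, ⁅w, X⁆⁆) + ⁅w, ⁅w, X⁆⁆ := by
      simp only [add_lie, lie_add]
      rw [← hcom]; abel
    rw [hexp] at h3
    have h2T : (2:ℝ) • ⁅z, ⁅w, X⁆⁆
        = (2:ℝ) • ((αc i z * αc i w).re • X + (αc i z * αc i w).im • j X) := by
      have heq : ⁅z, ⁅w, X⁆⁆ + ⁅z, ⁅w, X⁆⁆
          = (((αc i z + αc i w) ^ 2).re • X + ((αc i z + αc i w) ^ 2).im • j X)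
            - (((αc i z) ^ 2).re • X + ((αc i z) ^ 2).im • j X)
            - (((αc i w) ^ 2).re • X + ((αc i w) ^ 2).im • j X) := by
        rw [← h1, ← h2, ← h3]; abel
      rw [two_smul, two_smul, heq]
      have e1 : (αc i z + αc i w) ^ 2 = (αc i z) ^ 2 + (αc i w) ^ 2 + (αc i z * αc i w)
          + (αc i z * αc i w) := by ring
      rw [e1]
      simp only [Complex.add_re, Complex.add_im, add_smul]
      abel
    have := congrArg (fun y => (2⁻¹:ℝ) • y) h2T
    simpa [smul_smul] using this
  have hju : j u ∈ a := hja u hu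
  have hαju : αc i (j u) = Complex.I * A := hαj i u hu
  have h1 : ⁅u, ⁅u, X⁆⁆ = (A * A).re • X + (A * A).im • j X := pol u hu u hu
  have h2 : ⁅u, ⁅j u, X⁆⁆ = (A * (Complex.I * A)).re • X + (A * (Complex.I * A)).im • j X := by
    have := pol u hu (j u) hju; rwa [hαju] at this
  have h3 : ⁅v, ⁅u, X⁆⁆ = (B * A).re • X + (B * A).im • j X := pol v hv u hu
  have h4 : ⁅v, ⁅j u, X⁆⁆ = (B * (Complex.I * A)).re • X + (B * (Complex.I * A)).im • j X := by
    have := pol v hv (j u) hju; rwa [hαju] at this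
  set r : ℝ := (A.re * A.re - A.im * A.im) /
      ((A.re * A.re + A.im * A.im) * (A.re * A.re + A.im * A.im)) with hr
  set s : ℝ := -(A.re * A.im + A.im * A.re) /
      ((A.re * A.re + A.im * A.im) * (A.re * A.re + A.im * A.im)) with hs
  set η : L := ξ + r • ⁅u, X⁆ + s • ⁅j u, X⁆ with hη
  have hηk : η ∈ k :=
    k.add_mem (k.add_mem hξ (k.smul_mem _ (hpp u (hap hu) X (hpα i hX))))
      (k.smul_mem _ (hpp (j u) (hap hju) X (hpα i hX)))
  have hηu : ⁅η, u⁆ = 0 := by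
    rw [hη, add_lie, add_lie, smul_lie, smul_lie, hξu, ← lie_skew ⁅u, X⁆ u,
      ← lie_skew ⁅j u, X⁆ u, h1, h2]
    rw [hr, hs]
    match_scalars <;>
    · simp only [Complex.mul_re, Complex.mul_im, Complex.I_re, Complex.I_im]
      have hd' : A.re ^ 2 + A.im ^ 2 ≠ 0 := by rw [sq, sq]; exact hd
      field_simp
      ring
  have hηv : ⁅η, v⁆ = 0 := hcent η hηk hηu v hv
  rw [hη, add_lie, add_lie, smul_lie, smul_lie, ← lie_skew ⁅u, X⁆ v,
    ← lie_skew ⁅j u, X⁆ v, h3, h4] at hηv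
  have hξv : ⁅ξ, v⁆ = r • ((B * A).re • X + (B * A).im • j X)
      + s • ((B * (Complex.I * A)).re • X + (B * (Complex.I * A)).im • j X) := by
    rw [smul_neg, smul_neg] at hηv
    refine eq_of_sub_eq_zero ?_
    rw [← hηv]; abel
  rw [hξv, hr, hs]
  match_scalars <;>
  · simp only [Complex.div_re, Complex.div_im, Complex.normSq_apply,
      Complex.mul_re, Complex.mul_im, Complex.I_re, Complex.I_im]
    have hd' : A.re ^ 2 + A.im ^ 2 ≠ 0 := by rw [sq, sq]; exact hd
    field_simp
    ring
end
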